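/- For any R₁, R₂ ∈ SO(3) and any a ∈ (0,1), φ(R₁ᵀR₂) ≥ a·φ(R₃ᵀR₂) − (a/(1−a))·φ(R₃ᵀR₁) for every R₃ ∈ SO(3), where φ(R) := tr(I₃ − R) = (1/2)‖I₃ − R‖²_F. -/

import Mathlib

open Matrix BigOperators

def IsSO3 (R : Matrix (Fin 3) (Fin 3) ℝ) : Prop :=
  Rᵀ * R = 1 ∧ R * Rᵀ = 1 ∧ R.det = 1

noncomputable def phi (R : Matrix (Fin 3) (Fin 3) ℝ) : ℝ :=
  Matrix.trace ((1 : Matrix (Fin 3) (Fin 3) ℝ) - R)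

noncomputable def frobSq (M : Matrix (Fin 3) (Fin 3) ℝ) : ℝ := Matrix.trace (Mᵀ * M)

def hat (a : Fin 3 → ℝ) : Matrix (Fin 3) (Fin 3) ℝ :=
  !![0, -a 2, a 1; a 2, 0, -a 0; -a 1, a 0, 0]

def vee (M : Matrix (Fin 3) (Fin 3) ℝ) : Fin 3 → ℝ := ![M 2 1, M 0 2, M 1 0]

noncomputable def skw (M : Matrix (Fin 3) (Fin 3) ℝ) : Matrix (Fin 3) (Fin 3) ℝ :=
  (1/2 : ℝ) • (M - Mᵀ)

noncomputable def eR (M : Matrix (Fin 3) (Fin 3) ℝ) : Fin 3 → ℝ := vee (skw M)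

noncomputable def symPart (M : Matrix (Fin 3) (Fin 3) ℝ) : Matrix (Fin 3) (Fin 3) ℝ :=
  (1/2 : ℝ) • (M + Mᵀ)

noncomputable def lambdaMin (M : Matrix (Fin 3) (Fin 3) ℝ) : ℝ :=
  sInf {μ : ℝ | ∃ v : Fin 3 → ℝ, v ≠ 0 ∧ M.mulVec v = μ • v}


noncomputable def matVec (M : Matrix (Fin 3) (Fin 3) ℝ) : EuclideanSpace ℝ (Fin 3 × Fin 3) :=
  WithLp.toLp 2 (fun p : Fin 3 × Fin 3 => M p.1 p.2)

lemma norm_sq_matVec (M : Matrix (Fin 3) (Fin 3) ℝ) :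
    ‖matVec M‖ ^ 2 = Matrix.trace (Mᵀ * M) := by
  rw [EuclideanSpace.norm_eq, Real.sq_sqrt (Finset.sum_nonneg fun i _ => sq_nonneg _)]
  simp only [Matrix.trace, Matrix.diag, Matrix.mul_apply, Matrix.transpose_apply, matVec,
    Real.norm_eq_abs, sq_abs, PiLp.toLp_apply]
  rw [Fintype.sum_prod_type, Finset.sum_comm]
  refine Finset.sum_congr rfl fun j _ => Finset.sum_congr rfl fun i _ => by ring

lemma matVec_sub (M N : Matrix (Fin 3) (Fin 3) ℝ) :
    matVec (M - N) = matVec M - matVec N := by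
  ext p
  simp [matVec]

lemma frob_diff (R S : Matrix (Fin 3) (Fin 3) ℝ) (hR : Rᵀ * R = 1) (hS : Sᵀ * S = 1) :
    ‖matVec R - matVec S‖ ^ 2 = 2 * phi (Rᵀ * S) := by
  rw [← matVec_sub, norm_sq_matVec]
  have hexp : (R - S)ᵀ * (R - S) = Rᵀ * R - Rᵀ * S - Sᵀ * R + Sᵀ * S := by
    rw [Matrix.transpose_sub]
    noncomm_ring
  rw [hexp, hR, hS]
  have htr : Matrix.trace (Sᵀ * R) = Matrix.trace (Rᵀ * S) := by
    rw [← Matrix.trace_transpose (Sᵀ * R), Matrix.transpose_mul, Matrix.transpose_transpose]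
  simp only [phi, Matrix.trace_add, Matrix.trace_sub, htr]
  have h3 : Matrix.trace (1 : Matrix (Fin 3) (Fin 3) ℝ) = 3 := by
    simp [Matrix.trace_one]
  rw [h3]
  ring

theorem phi_young_ineq (R₁ R₂ : Matrix (Fin 3) (Fin 3) ℝ) (h1 : IsSO3 R₁) (h2 : IsSO3 R₂)
    (a : ℝ) (ha : a ∈ Set.Ioo (0:ℝ) 1) :
    ∀ R₃ : Matrix (Fin 3) (Fin 3) ℝ, IsSO3 R₃ →
      phi (R₁ᵀ * R₂) ≥ a * phi (R₃ᵀ * R₂) - (a / (1 - a)) * phi (R₃ᵀ * R₁) := by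
  intro R₃ h3
  obtain ⟨ha0, ha1⟩ := ha
  set x := ‖matVec R₃ - matVec R₁‖ with hx
  set y := ‖matVec R₁ - matVec R₂‖ with hy
  set z := ‖matVec R₃ - matVec R₂‖ with hz
  have htri : z ≤ x + y := norm_sub_le_norm_sub_add_norm_sub _ _ _
  have e12 : y ^ 2 = 2 * phi (R₁ᵀ * R₂) := frob_diff R₁ R₂ h1.1 h2.1
  have e32 : z ^ 2 = 2 * phi (R₃ᵀ * R₂) := frob_diff R₃ R₂ h3.1 h2.1
  have e31 : x ^ 2 = 2 * phi (R₃ᵀ * R₁) := frob_diff R₃ R₁ h3.1 h1.1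
  have hxn : 0 ≤ x := norm_nonneg _
  have hyn : 0 ≤ y := norm_nonneg _
  have hzn : 0 ≤ z := norm_nonneg _
  have h1a : (0:ℝ) < 1 - a := by linarith
  have key : 0 ≤ a * x ^ 2 + (1 - a) * y ^ 2 - a * (1 - a) * z ^ 2 := by
    nlinarith [sq_nonneg (a * x - (1 - a) * y),
      mul_nonneg (mul_nonneg ha0.le h1a.le)
        (mul_nonneg (by linarith : (0:ℝ) ≤ x + y - z) (by linarith : (0:ℝ) ≤ x + y + z))]
  have heq : (1 - a) * (y ^ 2 - a * z ^ 2 + (a / (1 - a)) * x ^ 2)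
      = a * x ^ 2 + (1 - a) * y ^ 2 - a * (1 - a) * z ^ 2 := by
    field_simp
    ring
  rw [← heq] at key
  have key2 : 0 ≤ y ^ 2 - a * z ^ 2 + (a / (1 - a)) * x ^ 2 := by
    have h := div_nonneg key h1a.le
    rwa [mul_div_cancel_left₀ _ h1a.ne'] at h
  have p12 : phi (R₁ᵀ * R₂) = y ^ 2 / 2 := by linarith
  have p32 : phi (R₃ᵀ * R₂) = z ^ 2 / 2 := by linarith
  have p31 : phi (R₃ᵀ * R₁) = x ^ 2 / 2 := by linarith
  rw [p12, p32, p31]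
  nlinarith [key2]
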